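/- Let A and B be Banach algebras, T ∈ hom(B, A), and ψ ∈ σ(B). Then A ×_T B is (0,ψ)-inner amenable if and only if B is ψ-inner amenable. Specifically: if (m,n) is a (0,ψ)-inner mean for A ×_T B then n is a ψ-inner mean for B; conversely if n is a ψ-inner mean for B then (−T''(n), n) is a (0,ψ)-inner mean for A ×_T B. -/

import Mathlib

open ContinuousLinearMap NormedSpace

variable {A B : Type*}
  [NonUnitalNormedRing A] [NormedSpace ℂ A] [IsScalarTower ℂ A A] [SMulCommClass ℂ A A]
  [CompleteSpace A]
  [NonUnitalNormedRing B] [NormedSpace ℂ B] [IsScalarTower ℂ B B] [SMulCommClass ℂ B B]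
  [CompleteSpace B]

/-- The morphism-product multiplication on `A × B`:
`(a₁,b₁)·(a₂,b₂) = (a₁a₂ + a₁T(b₂) + T(b₁)a₂, b₁b₂)`. -/
noncomputable def tMul (T : B →L[ℂ] A) (u v : A × B) : A × B :=
  (u.1 * v.1 + u.1 * T v.2 + T u.2 * v.1, u.2 * v.2)

/-- The ℓ¹ norm `‖(a,b)‖ = ‖a‖ + ‖b‖` on `A × B`. -/
noncomputable def tNorm (u : A × B) : ℝ := ‖u.1‖ + ‖u.2‖

/-- Auxiliary map: for `Φ` in the second dual of `E` and a bundled bilinear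
multiplication `M` on `E`, this is `f ↦ (a ↦ Φ (f ∘ M a))`, i.e. `f ↦ Φ · f`. -/
noncomputable def rAct {E : Type*} [NormedAddCommGroup E] [NormedSpace ℂ E]
    (M : E →L[ℂ] E →L[ℂ] E) (Φ : StrongDual ℂ (StrongDual ℂ E)) : StrongDual ℂ E →L[ℂ] StrongDual ℂ E :=
  (compL ℂ E (StrongDual ℂ E) ℂ Φ).comp
    (((compL ℂ E (E →L[ℂ] E) (StrongDual ℂ E)).flip M).comp (compL ℂ E E ℂ))

/-- The first Arens product `Φ □ Ψ` on the second dual of `E`, where the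
multiplication of `E` is given by the bundled bilinear map `M`:
`⟨Φ□Ψ, f⟩ = ⟨Φ, Ψ·f⟩` with `(Ψ·f)(a) = Ψ(f·a)` and `(f·a)(x) = f(ax)`. -/
noncomputable def arens1 {E : Type*} [NormedAddCommGroup E] [NormedSpace ℂ E]
    (M : E →L[ℂ] E →L[ℂ] E) (Φ Ψ : StrongDual ℂ (StrongDual ℂ E)) : StrongDual ℂ (StrongDual ℂ E) :=
  Φ.comp (rAct M Ψ)

/-- The second Arens product `Φ ◊ Ψ` on the second dual of `E`:
`⟨Φ◊Ψ, f⟩ = ⟨Ψ, f·Φ⟩` with `(f·Φ)(a) = Φ(a·f)` and `(a·f)(x) = f(xa)`. -/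
noncomputable def arens2 {E : Type*} [NormedAddCommGroup E] [NormedSpace ℂ E]
    (M : E →L[ℂ] E →L[ℂ] E) (Φ Ψ : StrongDual ℂ (StrongDual ℂ E)) : StrongDual ℂ (StrongDual ℂ E) :=
  Ψ.comp (rAct M.flip Φ)

/-- Bundled bilinear map `(u,v) ↦ M (f u) (g v)`. -/
noncomputable def bcomp {P E : Type*} [NormedAddCommGroup P] [NormedSpace ℂ P]
    [NormedAddCommGroup E] [NormedSpace ℂ E]
    (M : E →L[ℂ] E →L[ℂ] E) (f g : P →L[ℂ] E) : P →L[ℂ] P →L[ℂ] E :=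
  ((compL ℂ P E E).flip g).comp (M.comp f)

/-- The morphism-product multiplication `tMul T`, as a bundled bilinear map;
`tMulCLM T u v = tMul T u v`. -/
noncomputable def tMulCLM (T : B →L[ℂ] A) : (A × B) →L[ℂ] (A × B) →L[ℂ] (A × B) :=
  ((compL ℂ (A × B) A (A × B) (inl ℂ A B)).comp
    (bcomp (mul ℂ A) (fst ℂ A B) (fst ℂ A B + T.comp (snd ℂ A B)) +
     bcomp (mul ℂ A) (T.comp (snd ℂ A B)) (fst ℂ A B))) +
  ((compL ℂ (A × B) B (A × B) (inr ℂ A B)).comp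
    (bcomp (mul ℂ B) (snd ℂ A B) (snd ℂ A B)))

/-- The adjoint `T' : A' → B'`, `T'(f) = f ∘ T`. -/
noncomputable def dualT (T : B →L[ℂ] A) : StrongDual ℂ A →L[ℂ] StrongDual ℂ B := (compL ℂ B A ℂ).flip T

/-- The double adjoint `T'' : B'' → A''`, `T''(F) = F ∘ T'`. -/
noncomputable def ddT (T : B →L[ℂ] A) : StrongDual ℂ (StrongDual ℂ B) →L[ℂ] StrongDual ℂ (StrongDual ℂ A) :=
  (compL ℂ (StrongDual ℂ A) (StrongDual ℂ B) ℂ).flip (dualT T)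

/-- The identification `Θ : A'' × B'' → (A × B)''`, `Θ(Φ,Ψ)(F) = Φ(F∘inl) + Ψ(F∘inr)`,
i.e. `Θ(Φ,Ψ)(f,g) = Φ(f) + Ψ(g)` under the identification `(A × B)' ≅ A' × B'`. -/
noncomputable def Theta (Φ : StrongDual ℂ (StrongDual ℂ A)) (Ψ : StrongDual ℂ (StrongDual ℂ B)) :
    StrongDual ℂ (StrongDual ℂ (A × B)) :=
  Φ.comp ((compL ℂ A (A × B) ℂ).flip (inl ℂ A B)) +
  Ψ.comp ((compL ℂ B (A × B) ℂ).flip (inr ℂ A B))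

/-- The functional `(a,b) ↦ φ(a) + φ(T(b))` on `A × B`, for `φ : A → ℂ`. -/
noncomputable def charExt (T : B →L[ℂ] A) (φ : A →L[ℂ] ℂ) : (A × B) →L[ℂ] ℂ :=
  φ.comp (fst ℂ A B) + (φ.comp T).comp (snd ℂ A B)

/-- The functional `(a,b) ↦ ψ(b)` on `A × B`, for `ψ : B → ℂ`. -/
noncomputable def charSnd (ψ : B →L[ℂ] ℂ) : (A × B) →L[ℂ] ℂ :=
  ψ.comp (snd ℂ A B)

set_option linter.unusedSectionVars false

lemma rAct_apply' {E : Type*} [NormedAddCommGroup E] [NormedSpace ℂ E]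
    (M : E →L[ℂ] E →L[ℂ] E) (Φ : StrongDual ℂ (StrongDual ℂ E)) (f : StrongDual ℂ E) (a : E) :
    rAct M Φ f a = Φ (f.comp (M a)) := rfl

lemma arens1_apply' {E : Type*} [NormedAddCommGroup E] [NormedSpace ℂ E]
    (M : E →L[ℂ] E →L[ℂ] E) (Φ Ψ : StrongDual ℂ (StrongDual ℂ E)) (f : StrongDual ℂ E) :
    arens1 M Φ Ψ f = Φ (rAct M Ψ f) := rfl

lemma incl_apply' {E : Type*} [NormedAddCommGroup E] [NormedSpace ℂ E] (x : E) (f : StrongDual ℂ E) :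
    inclusionInDoubleDual ℂ E x f = f x := rfl

lemma Theta_apply' (Φ : StrongDual ℂ (StrongDual ℂ A)) (Ψ : StrongDual ℂ (StrongDual ℂ B)) (F : StrongDual ℂ (A × B)) :
    Theta Φ Ψ F = Φ (F.comp (inl ℂ A B)) + Ψ (F.comp (inr ℂ A B)) := rfl

lemma ddT_apply' (T : B →L[ℂ] A) (n : StrongDual ℂ (StrongDual ℂ B)) (F : StrongDual ℂ A) :
    ddT T n F = n (F.comp T) := rfl

lemma tMulCLM_apply' (T : B →L[ℂ] A) (u v : A × B) : tMulCLM T u v = tMul T u v := by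
  simp [tMulCLM, bcomp, tMul, mul_add]

/-- pullback along `snd`. -/
noncomputable def pullSnd : StrongDual ℂ B →L[ℂ] StrongDual ℂ (A × B) :=
  (compL ℂ (A × B) B ℂ).flip (snd ℂ A B)

/-- Forward direction workhorse. -/
lemma fwd (T : B →L[ℂ] A) (ψ : B →L[ℂ] ℂ) (W : StrongDual ℂ (StrongDual ℂ (A × B)))
    (h1 : W (charSnd ψ : (A × B) →L[ℂ] ℂ) = 1)
    (hW : ∀ u : A × B, arens1 (tMulCLM T) W (inclusionInDoubleDual ℂ (A × B) u) =
      arens1 (tMulCLM T) (inclusionInDoubleDual ℂ (A × B) u) W) :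
    (W.comp pullSnd) ψ = 1 ∧
    ∀ b : B, arens1 (mul ℂ B) (W.comp pullSnd) (inclusionInDoubleDual ℂ B b) =
      arens1 (mul ℂ B) (inclusionInDoubleDual ℂ B b) (W.comp pullSnd) := by
  refine ⟨h1, fun b => ?_⟩
  ext g
  have h := ContinuousLinearMap.ext_iff.mp (hW (0, b)) (g.comp (snd ℂ A B))
  have c1 : rAct (tMulCLM T) (inclusionInDoubleDual ℂ (A × B) (0, b)) (g.comp (snd ℂ A B)) =
      (rAct (mul ℂ B) (inclusionInDoubleDual ℂ B b) g).comp (snd ℂ A B) := by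
    refine ContinuousLinearMap.ext fun v => ?_
    simp [rAct_apply', incl_apply', tMulCLM_apply', tMul]
  have c2 : (g.comp (snd ℂ A B)).comp (tMulCLM T (0, b)) =
      (g.comp (mul ℂ B b)).comp (snd ℂ A B) := by
    refine ContinuousLinearMap.ext fun v => ?_
    simp [tMulCLM_apply', tMul]
  calc arens1 (mul ℂ B) (W.comp pullSnd) (inclusionInDoubleDual ℂ B b) g
      = W ((rAct (mul ℂ B) (inclusionInDoubleDual ℂ B b) g).comp (snd ℂ A B)) := rfl
    _ = W (rAct (tMulCLM T) (inclusionInDoubleDual ℂ (A × B) (0, b)) (g.comp (snd ℂ A B))) := by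
        rw [c1]
    _ = W ((g.comp (snd ℂ A B)).comp (tMulCLM T (0, b))) := h
    _ = W ((g.comp (mul ℂ B b)).comp (snd ℂ A B)) := by rw [c2]
    _ = arens1 (mul ℂ B) (inclusionInDoubleDual ℂ B b) (W.comp pullSnd) g := rfl

lemma theta_pull (m : StrongDual ℂ (StrongDual ℂ A)) (n : StrongDual ℂ (StrongDual ℂ B)) :
    (Theta m n).comp pullSnd = n := by
  ext g
  have e1 : ((g.comp (snd ℂ A B)).comp (inl ℂ A B)) = 0 := by
    refine ContinuousLinearMap.ext fun a => ?_; simp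
  have e2 : ((g.comp (snd ℂ A B)).comp (inr ℂ A B)) = g := by
    refine ContinuousLinearMap.ext fun b => ?_; simp
  show Theta m n (g.comp (snd ℂ A B)) = n g
  rw [Theta_apply', e1, e2, map_zero, zero_add]

lemma theta_sub (T : B →L[ℂ] A) (n : StrongDual ℂ (StrongDual ℂ B)) (X : StrongDual ℂ (A × B)) :
    Theta (-(ddT T n)) n X = n (X.comp (inr ℂ A B) - (X.comp (inl ℂ A B)).comp T) := by
  rw [Theta_apply', map_sub]
  show -(ddT T n (X.comp (inl ℂ A B))) + _ = _
  rw [ddT_apply']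
  ring

/-- Backward direction workhorse. -/
lemma bwd (T : B →L[ℂ] A) (hT : ∀ x y, T (x * y) = T x * T y) (ψ : B →L[ℂ] ℂ)
    (n : StrongDual ℂ (StrongDual ℂ B)) (hn1 : n ψ = 1)
    (hc : ∀ b : B, arens1 (mul ℂ B) n (inclusionInDoubleDual ℂ B b) =
      arens1 (mul ℂ B) (inclusionInDoubleDual ℂ B b) n) :
    Theta (-(ddT T n)) n (charSnd ψ : (A × B) →L[ℂ] ℂ) = 1 ∧
    ∀ u : A × B,
      arens1 (tMulCLM T) (Theta (-(ddT T n)) n) (inclusionInDoubleDual ℂ (A × B) u) =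
        arens1 (tMulCLM T) (inclusionInDoubleDual ℂ (A × B) u) (Theta (-(ddT T n)) n) := by
  constructor
  · have e1 : ((charSnd ψ : (A × B) →L[ℂ] ℂ).comp (inl ℂ A B)) = 0 := by
      refine ContinuousLinearMap.ext fun a => ?_; simp [charSnd]
    have e2 : ((charSnd ψ : (A × B) →L[ℂ] ℂ).comp (inr ℂ A B)) = ψ := by
      refine ContinuousLinearMap.ext fun b => ?_; simp [charSnd]
    rw [Theta_apply', e1, e2, map_zero, zero_add, hn1]
  · intro u
    ext F
    set g : StrongDual ℂ B := F.comp (inr ℂ A B) - (F.comp (inl ℂ A B)).comp T with hg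
    have hF : ∀ (x : A) (y : B), F (x, y) = F (x, 0) + F (0, y) := by
      intro x y; rw [← map_add]; simp
    have hFadd : ∀ x x' : A, F ((x + x', 0) : A × B) = F (x, 0) + F (x', 0) := by
      intro x x'; rw [← map_add]; simp
    set X₁ : StrongDual ℂ (A × B) := rAct (tMulCLM T) (inclusionInDoubleDual ℂ (A × B) u) F with hX₁
    have c3 : X₁.comp (inr ℂ A B) - (X₁.comp (inl ℂ A B)).comp T =
        rAct (mul ℂ B) (inclusionInDoubleDual ℂ B u.2) g := by
      refine ContinuousLinearMap.ext fun y => ?_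
      have l1 : X₁ ((0 : A), y) = F (T y * u.1, y * u.2) := by
        simp [hX₁, rAct_apply', incl_apply', tMulCLM_apply', tMul]
      have l2 : X₁ (T y, (0 : B)) = F (T y * u.1 + T y * T u.2, 0) := by
        simp [hX₁, rAct_apply', incl_apply', tMulCLM_apply', tMul]
      have e : (X₁.comp (inr ℂ A B) - (X₁.comp (inl ℂ A B)).comp T) y
          = X₁ ((0 : A), y) - X₁ (T y, (0 : B)) := rfl
      have r : rAct (mul ℂ B) (inclusionInDoubleDual ℂ B u.2) g y
          = F (0, y * u.2) - F (T (y * u.2), 0) := rfl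
      rw [e, l1, l2, r, hF (T y * u.1) (y * u.2), hFadd, hT]
      ring
    set X₂ : StrongDual ℂ (A × B) := F.comp (tMulCLM T u) with hX₂
    have c4 : X₂.comp (inr ℂ A B) - (X₂.comp (inl ℂ A B)).comp T = g.comp (mul ℂ B u.2) := by
      refine ContinuousLinearMap.ext fun y => ?_
      have l1 : X₂ ((0 : A), y) = F (u.1 * T y, u.2 * y) := by
        simp [hX₂, tMulCLM_apply', tMul]
      have l2 : X₂ (T y, (0 : B)) = F (u.1 * T y + T u.2 * T y, 0) := by
        simp [hX₂, tMulCLM_apply', tMul]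
      have e : (X₂.comp (inr ℂ A B) - (X₂.comp (inl ℂ A B)).comp T) y
          = X₂ ((0 : A), y) - X₂ (T y, (0 : B)) := rfl
      have r : (g.comp (mul ℂ B u.2)) y = F (0, u.2 * y) - F (T (u.2 * y), 0) := rfl
      rw [e, l1, l2, r, hF (u.1 * T y) (u.2 * y), hFadd, hT]
      ring
    have hcy := ContinuousLinearMap.ext_iff.mp (hc u.2) g
    calc arens1 (tMulCLM T) (Theta (-(ddT T n)) n) (inclusionInDoubleDual ℂ (A × B) u) F
        = Theta (-(ddT T n)) n X₁ := rfl
      _ = n (X₁.comp (inr ℂ A B) - (X₁.comp (inl ℂ A B)).comp T) := theta_sub T n X₁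
      _ = n (rAct (mul ℂ B) (inclusionInDoubleDual ℂ B u.2) g) := by rw [c3]
      _ = n (g.comp (mul ℂ B u.2)) := hcy
      _ = n (X₂.comp (inr ℂ A B) - (X₂.comp (inl ℂ A B)).comp T) := by rw [c4]
      _ = Theta (-(ddT T n)) n X₂ := (theta_sub T n X₂).symm
      _ = arens1 (tMulCLM T) (inclusionInDoubleDual ℂ (A × B) u) (Theta (-(ddT T n)) n) F := rfl
/-- for `ψ ∈ σ(B)`, `A ×_T B` is `(0,ψ)`-inner amenable iff `B` is
`ψ`-inner amenable; moreover if `(m,n)` is a `(0,ψ)`-inner mean for `A ×_T B` then `n`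
is a `ψ`-inner mean for `B`, and if `n` is a `ψ`-inner mean for `B` then
`(−T''(n), n)` is a `(0,ψ)`-inner mean for `A ×_T B`. -/
theorem inner_amenable_charSnd
    (T : B →L[ℂ] A) (hT : ∀ x y, T (x * y) = T x * T y) (hTn : ‖T‖ ≤ 1)
    (ψ : B →L[ℂ] ℂ) (hψ0 : ψ ≠ 0) (hψm : ∀ x y : B, ψ (x * y) = ψ x * ψ y) :
    ((∃ M : StrongDual ℂ (StrongDual ℂ (A × B)), M (charSnd ψ : (A × B) →L[ℂ] ℂ) = 1 ∧
        ∀ u : A × B, arens1 (tMulCLM T) M (inclusionInDoubleDual ℂ (A × B) u) =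
          arens1 (tMulCLM T) (inclusionInDoubleDual ℂ (A × B) u) M) ↔
      (∃ n : StrongDual ℂ (StrongDual ℂ B), n ψ = 1 ∧
        ∀ b : B, arens1 (mul ℂ B) n (inclusionInDoubleDual ℂ B b) =
          arens1 (mul ℂ B) (inclusionInDoubleDual ℂ B b) n)) ∧
    (∀ (m : StrongDual ℂ (StrongDual ℂ A)) (n : StrongDual ℂ (StrongDual ℂ B)),
      Theta m n (charSnd ψ : (A × B) →L[ℂ] ℂ) = 1 →
      (∀ u : A × B,
        arens1 (tMulCLM T) (Theta m n) (inclusionInDoubleDual ℂ (A × B) u) =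
          arens1 (tMulCLM T) (inclusionInDoubleDual ℂ (A × B) u) (Theta m n)) →
      (n ψ = 1 ∧
        ∀ b : B, arens1 (mul ℂ B) n (inclusionInDoubleDual ℂ B b) =
          arens1 (mul ℂ B) (inclusionInDoubleDual ℂ B b) n)) ∧
    (∀ n : StrongDual ℂ (StrongDual ℂ B), n ψ = 1 →
      (∀ b : B, arens1 (mul ℂ B) n (inclusionInDoubleDual ℂ B b) =
        arens1 (mul ℂ B) (inclusionInDoubleDual ℂ B b) n) →
      (Theta (-(ddT T n)) n (charSnd ψ : (A × B) →L[ℂ] ℂ) = 1 ∧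
        ∀ u : A × B,
          arens1 (tMulCLM T) (Theta (-(ddT T n)) n) (inclusionInDoubleDual ℂ (A × B) u) =
            arens1 (tMulCLM T) (inclusionInDoubleDual ℂ (A × B) u) (Theta (-(ddT T n)) n))) := by
  refine ⟨⟨?_, ?_⟩, ?_, ?_⟩
  · rintro ⟨M, h1, h2⟩
    exact ⟨M.comp pullSnd, fwd T ψ M h1 h2⟩
  · rintro ⟨n, hn1, hc⟩
    exact ⟨Theta (-(ddT T n)) n, (bwd T hT ψ n hn1 hc).1, (bwd T hT ψ n hn1 hc).2⟩
  · intro m n h1 h2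
    have h := fwd T ψ (Theta m n) h1 h2
    rwa [theta_pull] at h
  · intro n hn1 hc
    exact bwd T hT ψ n hn1 hc
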